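/- Let B be an n-by-n matrix with entries ±1 satisfying B² = kB for a positive integer k, with all entries in the first column equal to 1. Then the number of negative entries in each row of B is the same constant u, and n - k = 2u; in particular n and k have the same parity. -/

import Mathlib

theorem stmt_2 (n k : ℕ) (hn : 0 < n) (hk : 0 < k)
    (B : Matrix (Fin n) (Fin n) ℤ)
    (hpm : ∀ i j, B i j = 1 ∨ B i j = -1)
    (hB : B * B = (k : ℤ) • B)
    (hcol : ∀ i, B i ⟨0, hn⟩ = 1) :
    ∃ u : ℕ, (∀ i : Fin n,
        (Finset.univ.filter (fun j => B i j = -1)).card = u) ∧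
      n = k + 2 * u := by
  have key : ∀ i : Fin n,
      (n : ℤ) = k + 2 * (Finset.univ.filter (fun j => B i j = -1)).card := by
    intro i
    have h1 : (∑ j, B i j * B j ⟨0, hn⟩) = (k : ℤ) * B i ⟨0, hn⟩ := by
      have := congrFun (congrFun hB i) ⟨0, hn⟩
      simpa [Matrix.mul_apply, Matrix.smul_apply] using this
    have h2 : (∑ j, B i j) = (k : ℤ) := by
      simpa [hcol] using h1
    set S := Finset.univ.filter (fun j => B i j = -1) with hS
    have hsum : (∑ j, B i j) = (∑ j ∈ S, B i j) + ∑ j ∈ Sᶜ, B i j := by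
      rw [Finset.sum_add_sum_compl]
    have hS1 : (∑ j ∈ S, B i j) = -(S.card : ℤ) := by
      rw [Finset.sum_congr rfl (fun j hj => (Finset.mem_filter.mp hj).2)]
      simp [hS]
    have hS2 : (∑ j ∈ Sᶜ, B i j) = (Sᶜ.card : ℤ) := by
      have : ∀ j ∈ Sᶜ, B i j = 1 := by
        intro j hj
        rcases hpm i j with h | h
        · exact h
        · exact absurd (Finset.mem_filter.mpr ⟨Finset.mem_univ j, h⟩)
            (Finset.mem_compl.mp hj)
      rw [Finset.sum_congr rfl this]
      simp
    have hcard : Sᶜ.card = n - S.card := by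
      simp [Finset.card_compl]
    have hle : S.card ≤ n := by
      simpa using Finset.card_le_univ S
    have : -(S.card : ℤ) + ((n : ℤ) - S.card) = k := by
      rw [hsum, hS1, hS2] at h2
      rw [hcard] at h2
      push_cast [hle] at h2 ⊢
      linarith
    linarith
  refine ⟨(Finset.univ.filter (fun j => B ⟨0, hn⟩ j = -1)).card, fun i => ?_, ?_⟩
  · have h1 := key i
    have h2 := key ⟨0, hn⟩
    omega
  · have h2 := key ⟨0, hn⟩
    omega
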